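/- Consequently, for any formula A, the sequent - | ⊢ A is derivable in LSkG if and only if ⊢ A (with empty tree antecedent - ⊢ A) is derivable in LSkT. -/
import Mathlib


/-- Formulae of left skew monoidal closed logic: atoms, unit I, ⊗, ⊸. -/
inductive Fma : Type
  | atom : ℕ → Fma
  | I : Fma
  | tens : Fma → Fma → Fma
  | lolli : Fma → Fma → Fma

/-- Derivability in the stoup sequent calculus LSkG: `GDer S Γ A` means `S | Γ ⊢ A`. -/
inductive GDer : Option Fma → List Fma → Fma → Prop
  | ax {A} : GDer (some A) [] A
  | lolliL {A B C Γ Δ} : GDer none Γ A → GDer (some B) Δ C →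
      GDer (some (Fma.lolli A B)) (Γ ++ Δ) C
  | IL {Γ C} : GDer none Γ C → GDer (some Fma.I) Γ C
  | tensL {A B Γ C} : GDer (some A) (B :: Γ) C → GDer (some (Fma.tens A B)) Γ C
  | pass {A Γ C} : GDer (some A) Γ C → GDer none (A :: Γ) C
  | lolliR {S Γ A B} : GDer S (Γ ++ [A]) B → GDer S Γ (Fma.lolli A B)
  | IR : GDer none [] Fma.I
  | tensR {S Γ Δ A B} : GDer S Γ A → GDer none Δ B → GDer S (Γ ++ Δ) (Fma.tens A B)

/-- Trees: formulae, the empty tree, and pairing. -/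
inductive Tr : Type
  | fma : Fma → Tr
  | emp : Tr
  | pair : Tr → Tr → Tr

/-- Contexts: trees with a single hole. -/
inductive Ctx : Type
  | hole : Ctx
  | pairL : Ctx → Tr → Ctx
  | pairR : Tr → Ctx → Ctx

/-- Substitution of a tree into the hole of a context. -/
def plug : Ctx → Tr → Tr
  | Ctx.hole, U => U
  | Ctx.pairL C T, U => Tr.pair (plug C U) T
  | Ctx.pairR T C, U => Tr.pair T (plug C U)

/-- Derivability in the tree sequent calculus LSkT: `TDer T A` means `T ⊢ A`. -/
inductive TDer : Tr → Fma → Prop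
  | ax {A} : TDer (Tr.fma A) A
  | IL {T C} : TDer (plug T Tr.emp) C → TDer (plug T (Tr.fma Fma.I)) C
  | IR : TDer Tr.emp Fma.I
  | tensL {T A B C} : TDer (plug T (Tr.pair (Tr.fma A) (Tr.fma B))) C →
      TDer (plug T (Tr.fma (Fma.tens A B))) C
  | tensR {T U A B} : TDer T A → TDer U B → TDer (Tr.pair T U) (Fma.tens A B)
  | lolliL {T U A B C} : TDer U A → TDer (plug T (Tr.fma B)) C →
      TDer (plug T (Tr.pair (Tr.fma (Fma.lolli A B)) U)) C
  | lolliR {T A B} : TDer (Tr.pair T (Tr.fma A)) B → TDer T (Fma.lolli A B)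
  | assoc {T U₀ U₁ U₂ C} : TDer (plug T (Tr.pair U₀ (Tr.pair U₁ U₂))) C →
      TDer (plug T (Tr.pair (Tr.pair U₀ U₁) U₂)) C
  | unitL {T U C} : TDer (plug T U) C → TDer (plug T (Tr.pair Tr.emp U)) C
  | unitR {T U C} : TDer (plug T (Tr.pair U Tr.emp)) C → TDer (plug T U) C

/-- `T*`: turn a tree into a formula, replacing commas with ⊗ and `-` with `I`. -/
def Tr.star : Tr → Fma
  | Tr.fma A => A
  | Tr.emp => Fma.I
  | Tr.pair T U => Fma.tens T.star U.star

lemma ILinv' : ∀ {S Γ C}, GDer S Γ C → S = some Fma.I → GDer none Γ C := by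
  intro S Γ C d
  induction d with
  | ax => intro h; cases h; exact GDer.IR
  | lolliL f g ihf ihg => intro h; simp at h
  | IL f => intro _; exact f
  | tensL f ih => intro h; simp at h
  | pass f ih => intro h; simp at h
  | lolliR f ih => intro h; exact GDer.lolliR (ih h)
  | IR => intro h; simp at h
  | tensR f g ihf ihg => intro h; exact GDer.tensR (ihf h) g

lemma ILinv {Γ C} (d : GDer (some Fma.I) Γ C) : GDer none Γ C := ILinv' d rfl

-- tensL inversion

lemma tensLinv' : ∀ {S Γ C}, GDer S Γ C → ∀ X Y, S = some (Fma.tens X Y) →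
    GDer (some X) (Y :: Γ) C := by
  intro S Γ C d
  induction d with
  | ax =>
      intro X Y h; cases h
      exact GDer.tensR (Γ := []) (Δ := [Y]) GDer.ax (GDer.pass GDer.ax)
  | lolliL f g ihf ihg => intro X Y h; simp at h
  | IL f => intro X Y h; simp at h
  | tensL f => intro X Y h; injection h with h; cases h; exact f
  | pass f ih => intro X Y h; simp at h
  | lolliR f ih =>
      intro X Y h
      exact GDer.lolliR (Γ := Y :: _) (ih X Y h)
  | IR => intro X Y h; simp at h
  | tensR f g ihf ihg =>
      intro X Y h
      exact GDer.tensR (Γ := Y :: _) (ihf X Y h) g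

lemma tensLinv {X Y Γ C} (d : GDer (some (Fma.tens X Y)) Γ C) :
    GDer (some X) (Y :: Γ) C := tensLinv' d X Y rfl

-- generic context replacement lemma

lemma gctx {X : Fma} {ρ : List Fma}
    (h : ∀ Δ C, GDer (some X) Δ C → GDer none (ρ ++ Δ) C) :
    ∀ {S Γ C}, GDer S Γ C → ∀ Δ₁ Δ₂, Γ = Δ₁ ++ X :: Δ₂ →
      GDer S (Δ₁ ++ ρ ++ Δ₂) C := by
  intro S Γ C d
  induction d with
  | ax => intro Δ₁ Δ₂ e; exact absurd e (by simp)
  | @lolliL A B C Γa Δb f g ihf ihg =>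
      intro Δ₁ Δ₂ e
      rcases List.append_eq_append_iff.mp e with ⟨a', ha, hb⟩ | ⟨c', hc, hd⟩
      · subst ha; subst hb
        have := GDer.lolliL f (ihg a' Δ₂ rfl)
        simpa [List.append_assoc] using this
      · cases c' with
        | nil =>
            simp at hd; subst hd; subst hc
            have := GDer.lolliL f (ihg [] Δ₂ rfl)
            simpa using this
        | cons x c'' =>
            injection hd with hd1 hd2; cases hd1; subst hd2; subst hc
            have := GDer.lolliL (ihf Δ₁ c'' rfl) g
            simpa [List.append_assoc] using this
  | IL f ih =>
      intro Δ₁ Δ₂ e; exact GDer.IL (ih Δ₁ Δ₂ e)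
  | tensL f ih =>
      intro Δ₁ Δ₂ e
      subst e
      exact GDer.tensL (ih (_ :: Δ₁) Δ₂ rfl)
  | @pass A Γ' C f ih =>
      intro Δ₁ Δ₂ e
      cases Δ₁ with
      | nil =>
          injection e with e1 e2; cases e1; cases e2
          simpa using h _ _ f
      | cons B Δ₁' =>
          injection e with e1 e2; cases e1
          exact GDer.pass (ih Δ₁' Δ₂ e2)
  | @lolliR S Γ' A B f ih =>
      intro Δ₁ Δ₂ e
      subst e
      have := ih Δ₁ (Δ₂ ++ [A]) (by simp)
      exact GDer.lolliR (by simpa [List.append_assoc] using this)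
  | IR => intro Δ₁ Δ₂ e; exact absurd e (by simp)
  | @tensR S Γa Δb A B f g ihf ihg =>
      intro Δ₁ Δ₂ e
      rcases List.append_eq_append_iff.mp e with ⟨a', ha, hb⟩ | ⟨c', hc, hd⟩
      · subst ha; subst hb
        have := GDer.tensR f (ihg a' Δ₂ rfl)
        simpa [List.append_assoc] using this
      · cases c' with
        | nil =>
            simp at hd; subst hd; subst hc
            have := GDer.tensR f (ihg [] Δ₂ rfl)
            simpa using this
        | cons x c'' =>
            injection hd with hd1 hd2; cases hd1; subst hd2; subst hc
            have := GDer.tensR (ihf Δ₁ c'' rfl) g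
            simpa [List.append_assoc] using this

lemma plug_star_eq {U V : Tr} (h : U.star = V.star) :
    ∀ T : Ctx, (plug T U).star = (plug T V).star := by
  intro T; induction T with
  | hole => exact h
  | pairL C T ih => simp [plug, Tr.star, ih]
  | pairR T C ih => simp [plug, Tr.star, ih]

/-- replacement of stoup subformulas along a tree context -/

lemma starRepl {U V : Tr}
    (h : ∀ Γ C, GDer (some U.star) Γ C → GDer (some V.star) Γ C) :
    ∀ (T : Ctx) Γ C, GDer (some (plug T U).star) Γ C →
      GDer (some (plug T V).star) Γ C := by
  intro T
  induction T with
  | hole => exact h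
  | pairL C T ih =>
      intro Γ D d
      exact GDer.tensL (ih _ _ (tensLinv d))
  | pairR T C ih =>
      intro Γ D d
      have d1 := tensLinv d
      have d2 := gctx (X := (plug C U).star) (ρ := [(plug C V).star])
          (fun Δ E dd => GDer.pass (ih _ _ dd)) d1 [] Γ rfl
      exact GDer.tensL (by simpa using d2)

lemma fromT : ∀ {T C}, TDer T C → GDer (some T.star) [] C := by
  intro T C d
  induction d with
  | ax => exact GDer.ax
  | @IL T C f ih =>
      have e : (plug T Tr.emp).star = (plug T (Tr.fma Fma.I)).star :=
        plug_star_eq (U := Tr.emp) (V := Tr.fma Fma.I) (by simp [Tr.star]) T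
      rw [← e]; exact ih
  | IR => exact GDer.IL GDer.IR
  | @tensL T A B C f ih =>
      have e : (plug T (Tr.pair (Tr.fma A) (Tr.fma B))).star
          = (plug T (Tr.fma (Fma.tens A B))).star :=
        plug_star_eq (U := Tr.pair (Tr.fma A) (Tr.fma B))
          (V := Tr.fma (Fma.tens A B)) (by simp [Tr.star]) T
      rw [← e]; exact ih
  | tensR f g ihf ihg =>
      exact GDer.tensL (GDer.tensR (Γ := []) ihf (GDer.pass ihg))
  | @lolliL T Uu A B C f g ihf ihg =>
      refine starRepl (U := Tr.fma B)
        (V := Tr.pair (Tr.fma (Fma.lolli A B)) Uu) ?_ T [] C ihg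
      intro Γ D d
      exact GDer.tensL (GDer.lolliL (Γ := [Uu.star]) (GDer.pass ihf) d)
  | lolliR f ih =>
      exact GDer.lolliR (Γ := []) (tensLinv ih)
  | @assoc T U₀ U₁ U₂ C f ih =>
      refine starRepl (U := Tr.pair U₀ (Tr.pair U₁ U₂))
        (V := Tr.pair (Tr.pair U₀ U₁) U₂) ?_ T [] C ih
      intro Γ D d
      have d1 := tensLinv d
      have d2 := gctx (X := Fma.tens U₁.star U₂.star) (ρ := [U₁.star, U₂.star])
          (fun Δ E dd => GDer.pass (tensLinv dd)) d1 [] Γ rfl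
      exact GDer.tensL (GDer.tensL (by simpa using d2))
  | @unitL T Uu C f ih =>
      refine starRepl (U := Uu) (V := Tr.pair Tr.emp Uu) ?_ T [] C ih
      intro Γ D d
      exact GDer.tensL (GDer.IL (GDer.pass d))
  | @unitR T Uu C f ih =>
      refine starRepl (U := Tr.pair Uu Tr.emp) (V := Uu) ?_ T [] C ih
      intro Γ D d
      have d1 := tensLinv d
      have d2 := gctx (X := Fma.I) (ρ := [])
          (fun Δ E dd => ILinv dd) d1 [] Γ rfl
      simpa using d2

/-- left comb: extend a tree by a list of formulae -/

def comb (T : Tr) : List Fma → Tr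
  | [] => T
  | A :: Γ => comb (Tr.pair T (Tr.fma A)) Γ

lemma comb_append (T : Tr) : ∀ Γ Δ, comb T (Γ ++ Δ) = comb (comb T Γ) Δ := by
  intro Γ
  induction Γ generalizing T with
  | nil => intro Δ; rfl
  | cons A Γ ih => intro Δ; simp [comb, ih]

def compC : Ctx → Ctx → Ctx
  | Ctx.hole, D => D
  | Ctx.pairL C T, D => Ctx.pairL (compC C D) T
  | Ctx.pairR T C, D => Ctx.pairR T (compC C D)

lemma plug_compC (C D : Ctx) (U : Tr) : plug (compC C D) U = plug C (plug D U) := by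
  induction C with
  | hole => rfl
  | pairL C T ih => simp [compC, plug, ih]
  | pairR T C ih => simp [compC, plug, ih]

def combCtx : List Fma → Ctx
  | [] => Ctx.hole
  | A :: Γ => compC (combCtx Γ) (Ctx.pairL Ctx.hole (Tr.fma A))

lemma plug_combCtx : ∀ Γ U, plug (combCtx Γ) U = comb U Γ := by
  intro Γ
  induction Γ with
  | nil => intro U; rfl
  | cons A Γ ih => intro U; simp [combCtx, plug_compC, plug, comb, ih]

/-- fold of assoc: rotate a pair across a comb, under any outer context -/

lemma pairComb (E : Ctx) : ∀ (Δ : List Fma) (T U : Tr) (C : Fma),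
    TDer (plug E (Tr.pair T (comb U Δ))) C → TDer (plug E (comb (Tr.pair T U) Δ)) C := by
  intro Δ
  induction Δ with
  | nil => intro T U C d; exact d
  | cons A Δ ih =>
      intro T U C d
      have d1 := ih T (Tr.pair U (Tr.fma A)) C d
      rw [← plug_combCtx Δ, ← plug_compC] at d1
      have d2 := TDer.assoc d1
      rw [plug_compC, plug_combCtx] at d2
      exact d2

def stree : Option Fma → Tr
  | none => Tr.emp
  | some A => Tr.fma A

lemma toT : ∀ {S Γ C}, GDer S Γ C → TDer (comb (stree S) Γ) C := by
  intro S Γ C d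
  induction d with
  | ax => exact TDer.ax
  | @lolliL A B C Γ Δ f g ihf ihg =>
      rw [← plug_combCtx Δ] at ihg
      have d1 := TDer.lolliL ihf ihg
      have d2 := pairComb (combCtx Δ) Γ (Tr.fma (Fma.lolli A B)) Tr.emp C d1
      rw [← plug_combCtx Γ, ← plug_compC] at d2
      have d3 := TDer.unitR d2
      rw [plug_compC, plug_combCtx, plug_combCtx, ← comb_append] at d3
      exact d3
  | @IL Γ C f ih =>
      have : TDer (plug (combCtx Γ) Tr.emp) C := by rw [plug_combCtx]; exact ih
      have := TDer.IL this
      rwa [plug_combCtx] at this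
  | @tensL A B Γ C f ih =>
      have : TDer (plug (combCtx Γ) (Tr.pair (Tr.fma A) (Tr.fma B))) C := by
        rw [plug_combCtx]; exact ih
      have := TDer.tensL this
      rwa [plug_combCtx] at this
  | @pass A Γ C f ih =>
      have : TDer (plug (combCtx Γ) (Tr.fma A)) C := by rw [plug_combCtx]; exact ih
      have := TDer.unitL this
      rwa [plug_combCtx] at this
  | @lolliR S Γ A B f ih =>
      rw [comb_append] at ih
      exact TDer.lolliR ih
  | IR => exact TDer.IR
  | @tensR S Γ Δ A B f g ihf ihg =>
      have d1 := TDer.tensR ihf ihg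
      have d2 := pairComb Ctx.hole Δ (comb (stree S) Γ) Tr.emp (Fma.tens A B) d1
      rw [← plug_combCtx Δ] at d2
      have d3 := TDer.unitR (T := combCtx Δ) d2
      rw [plug_combCtx, ← comb_append] at d3
      exact d3

/-- Formula derivability agrees: `- | ⊢ A` in LSkG iff `- ⊢ A` in LSkT. -/
theorem empty_derivable_iff (A : Fma) : GDer none [] A ↔ TDer Tr.emp A := by
  constructor
  · intro d; exact toT d
  · intro d; exact ILinv (fromT d)
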